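/- Let $K : [0,\infty) \to \mathbb{R}$ be continuous with $K(t) \le 0$ for all $t \ge 0$ and $\int_0^{\infty} t\,K(t)\,dt > -\infty$. Let $m : [0,\infty) \to \mathbb{R}$ solve $m''(t) + K(t) m(t) = 0$ with $m(0) = 0$, $m'(0) = 1$. Then $m'$ is non-decreasing, the limit $\lim_{t \to \infty} m'(t)$ exists, and $1 \le \lim_{t \to \infty} m'(t) \le \exp\left(\int_0^{\infty} (-t\,K(t))\,dt\right) < \infty$. -/

import Mathlib

open MeasureTheory Real Filter Topology

/-- If `K ≤ 0` is continuous on `[0,∞)` with `∫₀^∞ t K(t) dt > -∞`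
(i.e. `t ↦ t K(t)` is integrable on `[0,∞)`), and `m` solves the Jacobi equation
`m'' + K m = 0` with `m(0)=0`, `m'(0)=1`, then `m'` is non-decreasing on `[0,∞)`,
the limit `L = lim_{t→∞} m'(t)` exists, and `1 ≤ L ≤ exp(∫₀^∞ (-t K(t)) dt) < ∞`. -/
theorem jacobi_derivative_limit (K m : ℝ → ℝ)
    (hKcont : ContinuousOn K (Set.Ici 0))
    (hKnonpos : ∀ t ≥ (0:ℝ), K t ≤ 0)
    (hKint : IntegrableOn (fun t => t * K t) (Set.Ici 0))
    (hODE : ∀ t ≥ (0:ℝ), HasDerivAt (deriv m) (-(K t * m t)) t)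
    (hm0 : m 0 = 0) (hm'0 : deriv m 0 = 1)
    (hm' : ∀ t ≥ (0:ℝ), HasDerivAt m (deriv m t) t) :
    MonotoneOn (deriv m) (Set.Ici 0) ∧
      ∃ L : ℝ, Tendsto (deriv m) atTop (nhds L) ∧ 1 ≤ L ∧
        L ≤ Real.exp (∫ t in Set.Ici (0:ℝ), -t * K t) := by
  have hm'cont : ∀ t ≥ (0:ℝ), ContinuousAt (deriv m) t := fun t ht => (hODE t ht).continuousAt
  have hmcont : ∀ t ≥ (0:ℝ), ContinuousAt m t := fun t ht => (hm' t ht).continuousAt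
  have hdd : ∀ t ≥ (0:ℝ), deriv (deriv m) t = -(K t * m t) := fun t ht => (hODE t ht).deriv
  -- m is nonnegative on [0, a] for every a ≥ 0
  have key : ∀ a ≥ (0:ℝ), ∀ s ∈ Set.Icc (0:ℝ) a, 0 ≤ m s := by
    intro a ha
    set S : Set ℝ := {t | t ∈ Set.Icc (0:ℝ) a ∧ ∀ s ∈ Set.Icc (0:ℝ) t, 0 ≤ m s} with hS
    have h0S : (0:ℝ) ∈ S := by
      refine ⟨⟨le_rfl, ha⟩, fun s hs => ?_⟩
      have : s = 0 := le_antisymm hs.2 hs.1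
      simp [this, hm0]
    have hbdd : BddAbove S := ⟨a, fun t ht => ht.1.2⟩
    set c := sSup S with hc
    have hc0 : (0:ℝ) ≤ c := le_csSup hbdd h0S
    have hca : c ≤ a := csSup_le ⟨0, h0S⟩ fun t ht => ht.1.2
    -- m ≥ 0 on [0, c]
    have mc_nonneg : ∀ s ∈ Set.Icc (0:ℝ) c, 0 ≤ m s := by
      intro s hs
      rcases lt_or_eq_of_le hs.2 with hsc | hsc
      · obtain ⟨t, htS, hst⟩ := exists_lt_of_lt_csSup ⟨0, h0S⟩ hsc
        exact htS.2 s ⟨hs.1, hst.le⟩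
      · subst hsc
        rcases eq_or_lt_of_le hs.1 with h0 | h0
        · simp [← h0, hm0]
        · have hne : (𝓝[Set.Ico (0:ℝ) c] c).NeBot := by
            rw [← mem_closure_iff_nhdsWithin_neBot, closure_Ico h0.ne]
            exact ⟨hs.1, le_rfl⟩
          have hcw : Tendsto m (𝓝[Set.Ico (0:ℝ) c] c) (𝓝 (m c)) :=
            (hmcont c hs.1).continuousWithinAt
          refine ge_of_tendsto hcw ?_
          filter_upwards [self_mem_nhdsWithin] with x hx
          obtain ⟨t, htS, hxt⟩ := exists_lt_of_lt_csSup ⟨0, h0S⟩ hx.2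
          exact htS.2 x ⟨hx.1, hxt.le⟩
    -- deriv m is monotone on [0, c]
    have mono_c : MonotoneOn (deriv m) (Set.Icc 0 c) := by
      refine monotoneOn_of_deriv_nonneg (convex_Icc 0 c)
        (fun t ht => (hm'cont t ht.1).continuousWithinAt) ?_ ?_
      · rw [interior_Icc]
        exact fun t ht => ((hODE t ht.1.le).differentiableAt).differentiableWithinAt
      · rw [interior_Icc]
        intro t ht
        rw [hdd t ht.1.le]
        have := mul_nonneg (neg_nonneg.mpr (hKnonpos t ht.1.le))
          (mc_nonneg t ⟨ht.1.le, ht.2.le⟩)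
        nlinarith
    have hm'c : (1:ℝ) ≤ deriv m c := by
      have := mono_c ⟨le_rfl, hc0⟩ ⟨hc0, le_rfl⟩ hc0
      rwa [hm'0] at this
    -- c = a
    by_contra hcon
    push_neg at hcon
    obtain ⟨s₀, hs₀a, hs₀⟩ := hcon
    have hca' : c < a := by
      rcases lt_or_eq_of_le hca with h | h
      · exact h
      · exact absurd (mc_nonneg s₀ ⟨hs₀a.1, h ▸ hs₀a.2⟩) (not_le.mpr hs₀)
    -- deriv m > 0 in a neighborhood of c
    have hev : ∀ᶠ t in nhds c, 0 < deriv m t :=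
      (hm'cont c hc0).eventually (eventually_gt_nhds (by linarith))
    obtain ⟨δ, hδ, hball⟩ := Metric.eventually_nhds_iff.mp hev
    set d := min (c + δ / 2) a with hd
    have hcd : c < d := lt_min (by linarith) hca'
    have hda : d ≤ a := min_le_right _ _
    have hmono_m : StrictMonoOn m (Set.Icc c d) := by
      refine strictMonoOn_of_deriv_pos (convex_Icc c d)
        (fun t ht => (hmcont t (hc0.trans ht.1)).continuousWithinAt) ?_
      rw [interior_Icc]
      intro t ht
      apply hball
      rw [Real.dist_eq, abs_lt]
      have : t < c + δ / 2 := lt_of_lt_of_le ht.2 (min_le_left _ _)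
      constructor <;> nlinarith [ht.1]
    have hdS : d ∈ S := by
      refine ⟨⟨hc0.trans hcd.le, hda⟩, fun s hs => ?_⟩
      rcases le_or_gt s c with h | h
      · exact mc_nonneg s ⟨hs.1, h⟩
      · have := hmono_m ⟨le_rfl, hcd.le⟩ ⟨h.le, hs.2⟩ h
        have hmc := mc_nonneg c ⟨hc0, le_rfl⟩
        linarith
    have := le_csSup hbdd hdS
    linarith
  have hm_nonneg : ∀ t ≥ (0:ℝ), 0 ≤ m t := fun t ht => key t ht t ⟨ht, le_rfl⟩
  -- deriv m is monotone on [0, ∞)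
  have mono : MonotoneOn (deriv m) (Set.Ici 0) := by
    refine monotoneOn_of_deriv_nonneg (convex_Ici 0)
      (fun t ht => (hm'cont t ht).continuousWithinAt) ?_ ?_
    · rw [interior_Ici]
      exact fun t ht => ((hODE t (le_of_lt ht)).differentiableAt).differentiableWithinAt
    · rw [interior_Ici]
      intro t ht
      rw [hdd t ht.le]
      have := mul_nonneg (neg_nonneg.mpr (hKnonpos t ht.le)) (hm_nonneg t ht.le)
      nlinarith
  have hm'ge1 : ∀ t ≥ (0:ℝ), 1 ≤ deriv m t := by
    intro t ht
    have := mono (Set.self_mem_Ici) ht ht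
    rwa [hm'0] at this
  -- m t ≤ t * deriv m t
  have hm_le : ∀ t ≥ (0:ℝ), m t ≤ t * deriv m t := by
    intro t ht
    have huIcc : Set.uIcc (0:ℝ) t = Set.Icc 0 t := Set.uIcc_of_le ht
    have hint : IntervalIntegrable (deriv m) volume 0 t := by
      apply ContinuousOn.intervalIntegrable
      rw [huIcc]
      exact fun s hs => (hm'cont s hs.1).continuousWithinAt
    have hfund : ∫ s in (0:ℝ)..t, deriv m s = m t - m 0 := by
      refine intervalIntegral.integral_eq_sub_of_hasDerivAt (fun s hs => ?_) hint
      rw [huIcc] at hs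
      exact hm' s hs.1
    have hmono_int : ∫ s in (0:ℝ)..t, deriv m s ≤ ∫ _ in (0:ℝ)..t, deriv m t := by
      apply intervalIntegral.integral_mono_on ht hint intervalIntegrable_const
      exact fun s hs => mono hs.1 ht hs.2
    rw [hfund, hm0, sub_zero] at hmono_int
    rwa [intervalIntegral.integral_const, smul_eq_mul, sub_zero] at hmono_int
  -- continuous extension of K
  set Kc : ℝ → ℝ := fun t => K (max t 0) with hKc_def
  have hKc : Continuous Kc :=
    hKcont.comp_continuous (continuous_id.max continuous_const) (fun x => (le_max_right _ _ : (0:ℝ) ≤ max x 0))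
  have hKc_eq : ∀ t ≥ (0:ℝ), Kc t = K t := fun t ht => by simp [hKc_def, max_eq_left ht]
  set F : ℝ → ℝ := fun t => ∫ s in (0:ℝ)..t, -s * Kc s with hF_def
  have hFcont : Continuous fun s : ℝ => -s * Kc s := by continuity
  have hF : ∀ t, HasDerivAt F (-t * Kc t) t := fun t =>
    (hFcont.integral_hasStrictDerivAt 0 t).hasDerivAt
  -- g = log ∘ deriv m
  set g : ℝ → ℝ := fun t => Real.log (deriv m t) with hg_def
  have hm'pos : ∀ t ≥ (0:ℝ), 0 < deriv m t := fun t ht => lt_of_lt_of_le one_pos (hm'ge1 t ht)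
  have hg : ∀ t ≥ (0:ℝ), HasDerivAt g (-(K t * m t) / deriv m t) t := fun t ht =>
    (hODE t ht).log (hm'pos t ht).ne'
  -- h = F - g is monotone on [0, ∞)
  set h : ℝ → ℝ := fun t => F t - g t with hh_def
  have hh : ∀ t ≥ (0:ℝ), HasDerivAt h (-t * Kc t - -(K t * m t) / deriv m t) t :=
    fun t ht => (hF t).sub (hg t ht)
  have hh_nonneg : ∀ t ≥ (0:ℝ), 0 ≤ -t * Kc t - -(K t * m t) / deriv m t := by
    intro t ht
    rw [hKc_eq t ht]
    have h1 : -(K t * m t) / deriv m t ≤ -K t * t := by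
      rw [div_le_iff₀ (hm'pos t ht)]
      have := mul_le_mul_of_nonneg_left (hm_le t ht) (neg_nonneg.mpr (hKnonpos t ht))
      nlinarith
    nlinarith
  have hh_mono : MonotoneOn h (Set.Ici 0) := by
    refine monotoneOn_of_deriv_nonneg (convex_Ici 0)
      (fun t ht => (hh t ht).continuousAt.continuousWithinAt) ?_ ?_
    · rw [interior_Ici]
      exact fun t ht => (hh t ht.le).differentiableAt.differentiableWithinAt
    · rw [interior_Ici]
      intro t ht
      rw [(hh t ht.le).deriv]
      exact hh_nonneg t ht.le
  have hg_le : ∀ t ≥ (0:ℝ), g t ≤ F t := by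
    intro t ht
    have := hh_mono Set.self_mem_Ici ht ht
    have hF0 : F 0 = 0 := intervalIntegral.integral_same
    have hg0 : g 0 = 0 := by simp [hg_def, hm'0]
    simp only [hh_def, hF0, hg0, sub_zero] at this
    linarith
  -- F t ≤ ∫ over Ici 0
  set I : ℝ := ∫ t in Set.Ici (0:ℝ), -t * K t with hI_def
  have hKint' : IntegrableOn (fun s => -s * K s) (Set.Ici 0) := by
    have heq : (fun s : ℝ => -s * K s) = fun s => -(s * K s) := by funext s; ring
    rw [heq]; exact hKint.neg
  have hF_le : ∀ t ≥ (0:ℝ), F t ≤ I := by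
    intro t ht
    have h1 : F t = ∫ s in Set.Ioc (0:ℝ) t, -s * K s := by
      simp only [hF_def]
      rw [intervalIntegral.integral_of_le ht]
      refine setIntegral_congr_fun measurableSet_Ioc (fun s hs => ?_)
      simp [hKc_eq s hs.1.le]
    rw [h1, hI_def]
    refine setIntegral_mono_set hKint' ?_ ?_
    · rw [EventuallyLE, ae_restrict_iff' measurableSet_Ici]
      filter_upwards with s hs
      exact mul_nonneg (by simpa using hs) (neg_nonneg.mpr (hKnonpos s hs)) |>.trans_eq (by ring)
    · exact HasSubset.Subset.eventuallyLE fun s hs => hs.1.le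
  have hm'_le : ∀ t ≥ (0:ℝ), deriv m t ≤ Real.exp I := by
    intro t ht
    have : deriv m t = Real.exp (g t) := (Real.exp_log (hm'pos t ht)).symm
    rw [this]
    exact Real.exp_le_exp.mpr ((hg_le t ht).trans (hF_le t ht))
  -- assemble the limit
  refine ⟨mono, ?_⟩
  set f : ℝ → ℝ := fun t => deriv m (max t 0) with hf_def
  have hf_mono : Monotone f := fun s t hst =>
    mono (le_max_right s 0) (le_max_right t 0) (max_le_max hst le_rfl)
  have hf_bdd : BddAbove (Set.range f) := by
    refine ⟨Real.exp I, ?_⟩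
    rintro x ⟨t, rfl⟩
    exact hm'_le _ (le_max_right t 0)
  have hf_tendsto : Tendsto f atTop (𝓝 (⨆ t, f t)) := tendsto_atTop_ciSup hf_mono hf_bdd
  refine ⟨⨆ t, f t, ?_, ?_, ?_⟩
  · refine hf_tendsto.congr' ?_
    filter_upwards [eventually_ge_atTop (0:ℝ)] with t ht
    simp [hf_def, max_eq_left ht]
  · have : f 0 = 1 := by simp [hf_def, hm'0]
    rw [← this]
    exact le_ciSup hf_bdd 0
  · exact ciSup_le fun t => hm'_le _ (le_max_right t 0)
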